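/- Let P be a row-stochastic N×N matrix with κ := min_{i,i'} ∑_j min(p_{ij}, p_{i'j}) > 0. Then there exists a unique probability vector μ with μP = μ, and for every state i, subset A, and n ≥ 0, |P^n(i,A) − μ(A)| ≤ (1−κ)^n. -/

import Mathlib

open Finset Filter Topology

section DobrushinAux

variable {N : ℕ}

private lemma dob_contraction (P : Matrix (Fin N) (Fin N) ℝ)
    (hpos : ∀ i j, 0 ≤ P i j) (hrow : ∀ i, ∑ j, P i j = 1)
    (κ : ℝ) (hκle : ∀ i i', κ ≤ ∑ j, min (P i j) (P i' j))
    (f : Fin N → ℝ) (hf : ∑ i, f i = 0) :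
    ∑ j, |∑ i, f i * P i j| ≤ (1 - κ) * ∑ i, |f i| := by
  set fp : Fin N → ℝ := fun i => max (f i) 0 with hfp
  set fm : Fin N → ℝ := fun i => max (-f i) 0 with hfm
  have hfpnn : ∀ i, 0 ≤ fp i := fun i => le_max_right _ _
  have hfmnn : ∀ i, 0 ≤ fm i := fun i => le_max_right _ _
  have hsub : ∀ i, fp i - fm i = f i := fun i => max_zero_sub_max_neg_zero_eq_self (f i)
  have habs : ∀ i, fp i + fm i = |f i| := fun i => max_zero_add_max_neg_zero_eq_abs_self (f i)
  set s : ℝ := ∑ i, fp i with hs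
  have hsm : ∑ i, fm i = s := by
    have : ∑ i, (fp i - fm i) = 0 := by simp only [hsub]; exact hf
    rw [Finset.sum_sub_distrib] at this; linarith
  have habs_sum : ∑ i, |f i| = 2 * s := by
    calc ∑ i, |f i| = ∑ i, (fp i + fm i) := by simp only [habs]
    _ = s + s := by rw [Finset.sum_add_distrib, hsm]
    _ = 2 * s := by ring
  have hsnn : 0 ≤ s := Finset.sum_nonneg fun i _ => hfpnn i
  rcases eq_or_lt_of_le hsnn with hs0 | hspos
  · -- s = 0, so f = 0
    have hz : ∀ i, f i = 0 := by
      intro i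
      have h1 : fp i = 0 := by
        have := Finset.sum_eq_zero_iff_of_nonneg (fun i _ => hfpnn i) |>.mp hs0.symm
        exact this i (mem_univ i)
      have h2 : fm i = 0 := by
        have := Finset.sum_eq_zero_iff_of_nonneg (fun i _ => hfmnn i) |>.mp (hsm.trans hs0.symm)
        exact this i (mem_univ i)
      rw [← hsub i, h1, h2]; ring
    simp only [hz, zero_mul, Finset.sum_const_zero, abs_zero, habs_sum, ← hs0]
    simp
  · -- main case
    have key : ∀ j, s * ∑ i, f i * P i j = ∑ i, ∑ i', fp i * fm i' * (P i j - P i' j) := by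
      intro j
      have : ∀ i, ∑ i', fp i * fm i' * (P i j - P i' j)
          = fp i * P i j * s - fp i * ∑ i', fm i' * P i' j := by
        intro i
        rw [← hsm, Finset.mul_sum, Finset.mul_sum, ← Finset.sum_sub_distrib]
        apply Finset.sum_congr rfl
        intro i' _; ring
      simp only [this]
      rw [Finset.sum_sub_distrib, ← Finset.sum_mul, ← Finset.sum_mul]
      have hfP : ∑ i, f i * P i j = ∑ i, fp i * P i j - ∑ i, fm i * P i j := by
        rw [← Finset.sum_sub_distrib]
        apply Finset.sum_congr rfl
        intro i _
        rw [← hsub i]; ring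
      rw [hfP]; ring
    have hrowdiff : ∀ i i', ∑ j, |P i j - P i' j| ≤ 2 - 2 * κ := by
      intro i i'
      have : ∀ j, |P i j - P i' j| = P i j + P i' j - 2 * min (P i j) (P i' j) := by
        intro j
        have h1 := max_add_min (P i j) (P i' j)
        have h2 : max (P i j) (P i' j) - min (P i j) (P i' j) = |P i j - P i' j| := by
          rcases le_total (P i j) (P i' j) with h | h
          · rw [max_eq_right h, min_eq_left h, abs_of_nonpos (by linarith)]; ring
          · rw [max_eq_left h, min_eq_right h, abs_of_nonneg (by linarith)]
        linarith
      simp only [this]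
      rw [Finset.sum_sub_distrib, Finset.sum_add_distrib, hrow, hrow, ← Finset.mul_sum]
      have := hκle i i'
      nlinarith
    have step : ∑ j, |∑ i, f i * P i j| ≤ (1 / s) * ∑ i, ∑ i', fp i * fm i' * (2 - 2 * κ) := by
      have h1 : ∀ j, |∑ i, f i * P i j| = (1/s) * |∑ i, ∑ i', fp i * fm i' * (P i j - P i' j)| := by
        intro j
        rw [← key, abs_mul, abs_of_pos hspos]
        field_simp
      simp only [h1]
      rw [← Finset.mul_sum]
      apply mul_le_mul_of_nonneg_left _ (by positivity)
      calc ∑ j, |∑ i, ∑ i', fp i * fm i' * (P i j - P i' j)|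
          ≤ ∑ j, ∑ i, ∑ i', |fp i * fm i' * (P i j - P i' j)| := by
            apply Finset.sum_le_sum
            intro j _
            exact (Finset.abs_sum_le_sum_abs _ _).trans
              (Finset.sum_le_sum fun i _ => Finset.abs_sum_le_sum_abs _ _)
        _ = ∑ i, ∑ i', fp i * fm i' * ∑ j, |P i j - P i' j| := by
            rw [Finset.sum_comm]
            apply Finset.sum_congr rfl; intro i _
            rw [Finset.sum_comm]
            apply Finset.sum_congr rfl; intro i' _
            rw [Finset.mul_sum]
            apply Finset.sum_congr rfl; intro j _
            rw [abs_mul, abs_mul, abs_of_nonneg (hfpnn i), abs_of_nonneg (hfmnn i')]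
        _ ≤ ∑ i, ∑ i', fp i * fm i' * (2 - 2 * κ) := by
            apply Finset.sum_le_sum; intro i _
            apply Finset.sum_le_sum; intro i' _
            exact mul_le_mul_of_nonneg_left (hrowdiff i i')
              (mul_nonneg (hfpnn i) (hfmnn i'))
    have hdouble : ∑ i, ∑ i', fp i * fm i' * (2 - 2 * κ) = s * s * (2 - 2 * κ) := by
      simp only [← Finset.sum_mul, ← Finset.mul_sum]
      rw [hsm, ← hs]
    rw [hdouble] at step
    calc ∑ j, |∑ i, f i * P i j| ≤ (1/s) * (s * s * (2 - 2*κ)) := step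
      _ = (1 - κ) * (2 * s) := by field_simp
      _ = (1 - κ) * ∑ i, |f i| := by rw [habs_sum]

private lemma dob_rowsum_pow (P : Matrix (Fin N) (Fin N) ℝ) (hrow : ∀ i, ∑ j, P i j = 1) :
    ∀ n i, ∑ j, (P ^ n) i j = 1 := by
  intro n
  induction n with
  | zero => intro i; simp [Matrix.one_apply]
  | succ n ih =>
    intro i
    rw [pow_succ]
    simp only [Matrix.mul_apply]
    rw [Finset.sum_comm]
    calc ∑ k, ∑ j, (P ^ n) i k * P k j = ∑ k, (P ^ n) i k * ∑ j, P k j := by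
          simp [Finset.mul_sum]
      _ = 1 := by simp only [hrow, mul_one]; exact ih i

private lemma dob_pow_entry_nonneg (P : Matrix (Fin N) (Fin N) ℝ) (hpos : ∀ i j, 0 ≤ P i j) :
    ∀ n i j, 0 ≤ (P ^ n) i j := by
  intro n
  induction n with
  | zero => intro i j; rw [pow_zero]; simp [Matrix.one_apply]; positivity
  | succ n ih =>
    intro i j
    rw [pow_succ, Matrix.mul_apply]
    exact Finset.sum_nonneg fun k _ => mul_nonneg (ih i k) (hpos k j)

private lemma dob_half_bound (d : Fin N → ℝ) (hd : ∑ j, d j = 0) (A : Finset (Fin N)) :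
    |∑ j ∈ A, d j| ≤ (∑ j, |d j|) / 2 := by
  have hsplit : ∑ j ∈ A, d j + ∑ j ∈ Aᶜ, d j = 0 := by
    rw [Finset.sum_add_sum_compl]; exact hd
  have h1 : |∑ j ∈ A, d j| ≤ ∑ j ∈ A, |d j| := Finset.abs_sum_le_sum_abs _ _
  have h2 : |∑ j ∈ A, d j| = |∑ j ∈ Aᶜ, d j| := by
    rw [show ∑ j ∈ A, d j = -∑ j ∈ Aᶜ, d j by linarith, abs_neg]
  have h3 : |∑ j ∈ Aᶜ, d j| ≤ ∑ j ∈ Aᶜ, |d j| := Finset.abs_sum_le_sum_abs _ _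
  have h4 : ∑ j ∈ A, |d j| + ∑ j ∈ Aᶜ, |d j| = ∑ j, |d j| :=
    Finset.sum_add_sum_compl A _
  linarith

private lemma dob_contraction_pow (P : Matrix (Fin N) (Fin N) ℝ)
    (hpos : ∀ i j, 0 ≤ P i j) (hrow : ∀ i, ∑ j, P i j = 1)
    (κ : ℝ) (hκle : ∀ i i', κ ≤ ∑ j, min (P i j) (P i' j)) (hκ1 : κ ≤ 1)
    (f : Fin N → ℝ) (hf : ∑ i, f i = 0) :
    ∀ n, ∑ j, |∑ i, f i * (P ^ n) i j| ≤ (1 - κ) ^ n * ∑ i, |f i| := by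
  intro n
  induction n with
  | zero =>
    simp only [pow_zero, Matrix.one_apply, one_mul]
    apply le_of_eq
    apply Finset.sum_congr rfl
    intro j _
    congr 1
    rw [Finset.sum_eq_single j]
    · simp
    · intro i _ hij; simp [hij]
    · simp
  | succ n ih =>
    set g : Fin N → ℝ := fun k => ∑ i, f i * (P ^ n) i k with hg
    have hgsum : ∑ k, g k = 0 := by
      rw [hg]
      simp only
      rw [Finset.sum_comm]
      calc ∑ i, ∑ k, f i * (P ^ n) i k = ∑ i, f i * ∑ k, (P ^ n) i k := by
            simp [Finset.mul_sum]
        _ = 0 := by simp only [dob_rowsum_pow P hrow, mul_one]; exact hf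
    have heq : ∀ j, ∑ i, f i * (P ^ (n+1)) i j = ∑ k, g k * P k j := by
      intro j
      rw [pow_succ]
      simp only [Matrix.mul_apply, Finset.mul_sum, hg]
      rw [Finset.sum_comm]
      apply Finset.sum_congr rfl; intro k _
      rw [Finset.sum_mul]
      apply Finset.sum_congr rfl; intro i _; ring
    calc ∑ j, |∑ i, f i * (P ^ (n+1)) i j| = ∑ j, |∑ k, g k * P k j| := by
          simp only [heq]
      _ ≤ (1 - κ) * ∑ k, |g k| := dob_contraction P hpos hrow κ hκle g hgsum
      _ ≤ (1 - κ) * ((1 - κ) ^ n * ∑ i, |f i|) := by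
          apply mul_le_mul_of_nonneg_left ih (by linarith)
      _ = (1 - κ) ^ (n + 1) * ∑ i, |f i| := by ring

end DobrushinAux

/-- Ergodic theorem under the Markov–Dobrushin condition: there is a unique
stationary distribution `μ` and `|Pⁿ(i,A) − μ(A)| ≤ (1−κ)ⁿ`. -/
theorem stmt_3 (N : ℕ) (hN : 1 ≤ N) (P : Matrix (Fin N) (Fin N) ℝ)
    (hpos : ∀ i j, 0 ≤ P i j) (hrow : ∀ i, ∑ j, P i j = 1)
    (κ : ℝ) (hκ : κ = ⨅ i : Fin N, ⨅ i' : Fin N, ∑ j, min (P i j) (P i' j))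
    (hκpos : 0 < κ) :
    ∃ μ : Fin N → ℝ, (∀ j, 0 ≤ μ j) ∧ (∑ j, μ j = 1) ∧
      (∀ j, ∑ i, μ i * P i j = μ j) ∧
      (∀ ν : Fin N → ℝ, (∀ j, 0 ≤ ν j) → (∑ j, ν j = 1) →
        (∀ j, ∑ i, ν i * P i j = ν j) → ν = μ) ∧
      ∀ (i : Fin N) (A : Finset (Fin N)) (n : ℕ),
        |(∑ j ∈ A, (P ^ n) i j) - ∑ j ∈ A, μ j| ≤ (1 - κ) ^ n := by
  have hNe : Nonempty (Fin N) := ⟨⟨0, hN⟩⟩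
  set i₀ : Fin N := ⟨0, hN⟩ with hi₀
  have hκle : ∀ i i', κ ≤ ∑ j, min (P i j) (P i' j) := by
    intro i i'
    rw [hκ]
    have h1 : (⨅ i : Fin N, ⨅ i' : Fin N, ∑ j, min (P i j) (P i' j))
        ≤ ⨅ i' : Fin N, ∑ j, min (P i j) (P i' j) :=
      ciInf_le (Set.Finite.bddBelow (Set.finite_range _)) i
    have h2 : (⨅ i' : Fin N, ∑ j, min (P i j) (P i' j)) ≤ ∑ j, min (P i j) (P i' j) :=
      ciInf_le (Set.Finite.bddBelow (Set.finite_range _)) i'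
    exact h1.trans h2
  have hκ1 : κ ≤ 1 := by
    have := hκle i₀ i₀
    simpa [hrow i₀] using this
  have hr0 : (0:ℝ) ≤ 1 - κ := by linarith
  have hr1 : 1 - κ < 1 := by linarith
  -- iterated stationarity
  have hstat_pow : ∀ (ν : Fin N → ℝ), (∀ j, ∑ i, ν i * P i j = ν j) →
      ∀ n j, ∑ i, ν i * (P ^ n) i j = ν j := by
    intro ν hν n
    induction n with
    | zero =>
      intro j
      simp only [pow_zero, Matrix.one_apply]
      rw [Finset.sum_eq_single j]
      · simp
      · intro i _ hij; simp [hij]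
      · simp
    | succ n ih =>
      intro j
      rw [pow_succ]
      simp only [Matrix.mul_apply, Finset.mul_sum]
      rw [Finset.sum_comm]
      calc ∑ k, ∑ i, ν i * ((P ^ n) i k * P k j)
          = ∑ k, (∑ i, ν i * (P ^ n) i k) * P k j := by
            apply Finset.sum_congr rfl; intro k _
            rw [Finset.sum_mul]
            apply Finset.sum_congr rfl; intro i _; ring
        _ = ∑ k, ν k * P k j := by simp only [ih]
        _ = ν j := hν j
  -- the rows of Pⁿ converge
  have hcauchy : ∀ j : Fin N, ∃ L : ℝ,
      Tendsto (fun n => (P ^ n) i₀ j) atTop (𝓝 L) := by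
    intro j
    apply cauchySeq_tendsto_of_complete
    apply cauchySeq_of_le_geometric (1 - κ) 2 hr1
    intro n
    rw [Real.dist_eq]
    set g : Fin N → ℝ := fun k => P i₀ k - (if k = i₀ then 1 else 0) with hg
    have hgsum : ∑ k, g k = 0 := by
      simp [hg, Finset.sum_sub_distrib, hrow i₀]
    have hgabs : ∑ k, |g k| ≤ 2 := by
      calc ∑ k, |g k| ≤ ∑ k, (P i₀ k + (if k = i₀ then 1 else 0)) := by
            apply Finset.sum_le_sum; intro k _
            calc |g k| ≤ |P i₀ k| + |(if k = i₀ then 1 else 0 : ℝ)| := abs_sub _ _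
              _ = P i₀ k + (if k = i₀ then 1 else 0) := by
                  rw [abs_of_nonneg (hpos i₀ k)]
                  congr 1
                  split <;> simp
        _ = 2 := by
            rw [Finset.sum_add_distrib, hrow i₀, Finset.sum_ite_eq' univ i₀]
            norm_num
    have hdiff : ∑ k, g k * (P ^ n) k j = (P ^ (n+1)) i₀ j - (P ^ n) i₀ j := by
      simp only [hg, sub_mul, Finset.sum_sub_distrib]
      congr 1
      · rw [pow_succ', Matrix.mul_apply]
      · rw [Finset.sum_eq_single i₀]
        · simp
        · intro k _ hk; simp [hk]
        · simp
    calc |(P ^ n) i₀ j - (P ^ (n+1)) i₀ j| = |∑ k, g k * (P ^ n) k j| := by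
          rw [hdiff, abs_sub_comm]
      _ ≤ ∑ j', |∑ k, g k * (P ^ n) k j'| :=
          Finset.single_le_sum (f := fun j' => |∑ k, g k * (P ^ n) k j'|)
            (fun j' _ => abs_nonneg _) (mem_univ j)
      _ ≤ (1 - κ) ^ n * ∑ k, |g k| :=
          dob_contraction_pow P hpos hrow κ hκle hκ1 g hgsum n
      _ ≤ 2 * (1 - κ) ^ n := by nlinarith [pow_nonneg hr0 n]
  choose μ hμ using hcauchy
  have hμnn : ∀ j, 0 ≤ μ j := fun j =>
    ge_of_tendsto' (hμ j) (fun n => dob_pow_entry_nonneg P hpos n i₀ j)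
  have hμsum : ∑ j, μ j = 1 := by
    have h1 : Tendsto (fun n => ∑ j, (P ^ n) i₀ j) atTop (𝓝 (∑ j, μ j)) :=
      tendsto_finset_sum _ (fun j _ => hμ j)
    have h2 : (fun n => ∑ j, (P ^ n) i₀ j) = fun _ => (1:ℝ) := by
      funext n; exact dob_rowsum_pow P hrow n i₀
    rw [h2] at h1
    exact tendsto_nhds_unique h1 tendsto_const_nhds
  have hstat : ∀ j, ∑ i, μ i * P i j = μ j := by
    intro j
    have h1 : Tendsto (fun n => (P ^ (n+1)) i₀ j) atTop (𝓝 (μ j)) :=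
      (hμ j).comp (tendsto_add_atTop_nat 1)
    have h2 : (fun n => (P ^ (n+1)) i₀ j) = fun n => ∑ i, (P ^ n) i₀ i * P i j := by
      funext n; rw [pow_succ, Matrix.mul_apply]
    rw [h2] at h1
    have h3 : Tendsto (fun n => ∑ i, (P ^ n) i₀ i * P i j) atTop (𝓝 (∑ i, μ i * P i j)) :=
      tendsto_finset_sum _ (fun i _ => (hμ i).mul_const _)
    exact tendsto_nhds_unique h3 h1
  refine ⟨μ, hμnn, hμsum, hstat, ?_, ?_⟩
  · -- uniqueness
    intro ν hνnn hνsum hνstat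
    have hdsum : ∑ i, (ν i - μ i) = 0 := by
      rw [Finset.sum_sub_distrib, hνsum, hμsum]; ring
    have hbound : ∀ n, ∑ j, |ν j - μ j| ≤ (1 - κ) ^ n * ∑ i, |ν i - μ i| := by
      intro n
      have hc := dob_contraction_pow P hpos hrow κ hκle hκ1 (fun i => ν i - μ i) hdsum n
      calc ∑ j, |ν j - μ j| = ∑ j, |∑ i, (ν i - μ i) * (P ^ n) i j| := by
            apply Finset.sum_congr rfl; intro j _
            congr 1
            rw [show ∑ i, (ν i - μ i) * (P ^ n) i j
                = ∑ i, ν i * (P ^ n) i j - ∑ i, μ i * (P ^ n) i j by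
                  rw [← Finset.sum_sub_distrib]
                  apply Finset.sum_congr rfl; intro i _; ring,
              hstat_pow ν hνstat n j, hstat_pow μ hstat n j]
        _ ≤ (1 - κ) ^ n * ∑ i, |ν i - μ i| := hc
    have hD0 : ∑ j, |ν j - μ j| ≤ 0 := by
      have hlim : Tendsto (fun n => (1 - κ) ^ n * ∑ i, |ν i - μ i|) atTop (𝓝 0) := by
        have := (tendsto_pow_atTop_nhds_zero_of_lt_one hr0 hr1).mul_const (∑ i, |ν i - μ i|)
        simpa using this
      exact ge_of_tendsto' hlim hbound
    funext j
    have hall := Finset.sum_eq_zero_iff_of_nonneg (fun j _ => abs_nonneg (ν j - μ j)) |>.mp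
      (le_antisymm hD0 (Finset.sum_nonneg fun j _ => abs_nonneg _)) j (mem_univ j)
    have := abs_eq_zero.mp hall
    linarith [sub_eq_zero.mp this]
  · -- the quantitative bound
    intro i A n
    set d : Fin N → ℝ := fun j => (P ^ n) i j - μ j with hd
    have hdsum0 : ∑ j, d j = 0 := by
      simp only [hd]
      rw [Finset.sum_sub_distrib, dob_rowsum_pow P hrow n i, hμsum]; ring
    have habsd : ∑ j, |d j| ≤ 2 * (1 - κ) ^ n := by
      set f : Fin N → ℝ := fun k => (if k = i then 1 else 0) - μ k with hf
      have hfsum : ∑ k, f k = 0 := by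
        simp only [hf]
        rw [Finset.sum_sub_distrib, Finset.sum_ite_eq' univ i, hμsum]
        simp
      have hkey : ∀ j, ∑ k, f k * (P ^ n) k j = d j := by
        intro j
        simp only [hf, hd, sub_mul, Finset.sum_sub_distrib]
        congr 1
        · rw [Finset.sum_eq_single i]
          · simp
          · intro k _ hk; simp [hk]
          · simp
        · exact hstat_pow μ hstat n j
      have hfabs : ∑ k, |f k| ≤ 2 := by
        calc ∑ k, |f k| ≤ ∑ k, ((if k = i then 1 else 0) + μ k) := by
              apply Finset.sum_le_sum; intro k _
              calc |f k| ≤ |(if k = i then 1 else 0 : ℝ)| + |μ k| := abs_sub _ _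
                _ = (if k = i then 1 else 0) + μ k := by
                    rw [abs_of_nonneg (hμnn k)]
                    congr 1
                    split <;> simp
          _ = 2 := by
              rw [Finset.sum_add_distrib, Finset.sum_ite_eq' univ i, hμsum]
              norm_num
      have hc := dob_contraction_pow P hpos hrow κ hκle hκ1 f hfsum n
      simp only [hkey] at hc
      nlinarith [pow_nonneg hr0 n]
    have hsplit : (∑ j ∈ A, (P ^ n) i j) - ∑ j ∈ A, μ j = ∑ j ∈ A, d j := by
      rw [← Finset.sum_sub_distrib]
    rw [hsplit]
    calc |∑ j ∈ A, d j| ≤ (∑ j, |d j|) / 2 := dob_half_bound d hdsum0 A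
      _ ≤ (1 - κ) ^ n := by linarith
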